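/- arXiv:2005.09125 — 6 statements merged into one kernel-verified Lean document; each statement's English description precedes it below -/
import Mathlib

section
/- If A is a finitely ambiguous NBW (FANBW) and w ∈ L(A), then the accepting run DAG G_{w,A} has a separate level: there exists k ≥ 1 such that every vertex at a level ≥ k lying on an accepting ω-branch of G_{w,A} has exactly one predecessor in G_{w,A}. -/
open Classical

variable {Q : Type} {A : Type}

/-- A nondeterministic Büchi automaton on words (NBW). -/
structure NBW (Q : Type) (A : Type) where
  I : Set Q
  δ : Q → A → Set Q
  F : Set Q

namespace NBW

/-- Transition function extended to sets of states. -/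
def δset (M : NBW Q A) (S : Set Q) (a : A) : Set Q := ⋃ q ∈ S, M.δ q a

/-- A run of `M` on the word `w`. -/
def IsRun (M : NBW Q A) (w : ℕ → A) (ρ : ℕ → Q) : Prop :=
  ρ 0 ∈ M.I ∧ ∀ i, ρ (i + 1) ∈ M.δ (ρ i) (w i)

/-- An accepting run: a run visiting accepting states infinitely often. -/
def IsAccRun (M : NBW Q A) (w : ℕ → A) (ρ : ℕ → Q) : Prop :=
  M.IsRun w ρ ∧ ∀ n, ∃ m ≥ n, ρ m ∈ M.F

/-- `M` accepts the word `w`. -/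
def Accepts (M : NBW Q A) (w : ℕ → A) : Prop := ∃ ρ, M.IsAccRun w ρ

/-- `M` is finitely ambiguous (an FANBW): each word has finitely many accepting runs. -/
def FA (M : NBW Q A) : Prop := ∀ w : ℕ → A, {ρ | M.IsAccRun w ρ}.Finite

/-- Completeness of the transition function. -/
def Complete (M : NBW Q A) : Prop := ∀ (q : Q) (a : A), (M.δ q a).Nonempty

/-- Reverse determinism: each state has at most one `a`-predecessor. -/
def ReverseDet (M : NBW Q A) : Prop :=
  ∀ (q' : Q) (a : A), {q | q' ∈ M.δ q a}.Subsingleton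

/-- The set of states at level `l` of the run DAG `G_{w,M}`. -/
def V (M : NBW Q A) (w : ℕ → A) : ℕ → Set Q
  | 0 => M.I
  | l + 1 => M.δset (V M w l) (w l)

/-- Edge of the run DAG `G_{w,M}` from `⟨q,l⟩` to `⟨q',l+1⟩`. -/
def Edge (M : NBW Q A) (w : ℕ → A) (l : ℕ) (q q' : Q) : Prop :=
  q ∈ M.V w l ∧ q' ∈ M.δ q (w l)

/-- An ω-branch of the run DAG `G_{w,M}` (identified with its sequence of states). -/
def IsBranch (M : NBW Q A) (w : ℕ → A) (b : ℕ → Q) : Prop :=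
  b 0 ∈ M.I ∧ ∀ l, M.Edge w l (b l) (b (l + 1))

/-- Edge of the co-deterministic run DAG `G^e_{w,M}`: only the edge from the
minimal-index predecessor (w.r.t. the linear order enumerating `Q`) is kept. -/
def EdgeE [LinearOrder Q] (M : NBW Q A) (w : ℕ → A) (l : ℕ) (q q' : Q) : Prop :=
  IsLeast {p | p ∈ M.V w l ∧ q' ∈ M.δ p (w l)} q

/-- An ω-branch of the co-deterministic run DAG `G^e_{w,M}`. -/
def IsBranchE [LinearOrder Q] (M : NBW Q A) (w : ℕ → A) (b : ℕ → Q) : Prop :=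
  b 0 ∈ M.I ∧ ∀ l, M.EdgeE w l (b l) (b (l + 1))

/-- A branch of `G^e_{w,M}` starting from vertex `⟨q,l⟩`. -/
def BranchFromE [LinearOrder Q] (M : NBW Q A) (w : ℕ → A) (l : ℕ) (q : Q) (b : ℕ → Q) : Prop :=
  b 0 = q ∧ q ∈ M.V w l ∧ ∀ i, M.EdgeE w (l + i) (b i) (b (i + 1))

/-- The vertex `⟨q,l⟩` of `G^e_{w,M}` is finite: no infinite branch starts from it. -/
def FiniteVertexE [LinearOrder Q] (M : NBW Q A) (w : ℕ → A) (l : ℕ) (q : Q) : Prop :=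
  ¬ ∃ b, M.BranchFromE w l q b

/-- The minimal set of predecessors `S_min` of `δ(S,b)` within `S`. -/
def Smin [LinearOrder Q] (M : NBW Q A) (S : Set Q) (b : A) : Set Q :=
  {q | ∃ q' ∈ M.δset S b, IsLeast {p | p ∈ S ∧ q' ∈ M.δ p b} q}

/-- The reduced transition function `δ^e` for the level with state set `S` and letter `b`. -/
def δe [LinearOrder Q] (M : NBW Q A) (S : Set Q) (b : A) (S₁ : Set Q) : Set Q :=
  M.δset (S₁ ∩ M.Smin S b) b

/-- The reduced transition function at level `ℓ` of `G^e_{w,M}`. -/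
def δeAt [LinearOrder Q] (M : NBW Q A) (w : ℕ → A) (ℓ : ℕ) (S₁ : Set Q) : Set Q :=
  M.δe (M.V w ℓ) (w ℓ) S₁

end NBW

section DAG

variable (E : ℕ → Q → Q → Prop) (U : Set (Q × ℕ))

/-- An infinite branch from vertex `v` staying inside the vertex set `U`,
following the edge relation `E`. -/
def DagBranchIn (v : Q × ℕ) (b : ℕ → Q) : Prop :=
  b 0 = v.1 ∧ (∀ i, (b i, v.2 + i) ∈ U) ∧ ∀ i, E (v.2 + i) (b i) (b (i + 1))

/-- Vertex `v` is finite in the sub-DAG `U`: no infinite branch from `v` inside `U`. -/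
def DagFiniteIn (v : Q × ℕ) : Prop := ¬ ∃ b, DagBranchIn E U v b

/-- One-step reachability inside `U`. -/
def DagStep (v v' : Q × ℕ) : Prop :=
  v ∈ U ∧ v' ∈ U ∧ v'.2 = v.2 + 1 ∧ E v.2 v.1 v'.1

/-- Vertex `v` is F-free in `U`: not finite, and no F-vertex reachable from it in `U`. -/
def DagFFreeIn (F : Set Q) (v : Q × ℕ) : Prop :=
  ¬ DagFiniteIn E U v ∧ ∀ v', Relation.ReflTransGen (DagStep E U) v v' → v'.1 ∉ F

/-- The rank-stripping sequence of sub-DAGs: `G⁰ = G0`; `G^{2i+1}` removes the finite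
vertices of `G^{2i}`; `G^{2i+2}` removes the F-free vertices of `G^{2i+1}`. -/
def DagStrip (F : Set Q) (G0 : Set (Q × ℕ)) : ℕ → Set (Q × ℕ)
  | 0 => G0
  | i + 1 =>
      let U' := DagStrip F G0 i
      if i % 2 = 0 then U' \ {v | DagFiniteIn E U' v}
      else U' \ {v | DagFFreeIn E U' F v}

end DAG

namespace NBW

/-- The vertex set of the run DAG `G_{w,M}` (also of `G^e_{w,M}`). -/
def DagVertices (M : NBW Q A) (w : ℕ → A) : Set (Q × ℕ) := {v | v.1 ∈ M.V w v.2}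

/-- Level rankings with maximum rank 2: `none` plays the role of `⊥`. -/
def IsLR (M : NBW Q A) (f : Q → Option (Fin 3)) : Prop :=
  ∀ q r, f q = some r → q ∈ M.F → (r : ℕ) % 2 = 0

/-- Domain of a level ranking. -/
def rankDom (f : Q → Option (Fin 3)) : Set Q := {q | (f q).isSome}

/-- Coverage relation `f' ⪯^{δ^e}_a f` for level rankings. -/
def Covers [LinearOrder Q] (M : NBW Q A) (a : A) (f f' : Q → Option (Fin 3)) : Prop :=
  (∀ q r q', f q = some r → q' ∈ M.δe (rankDom f) a {q} →
    ∃ r', f' q' = some r' ∧ r' ≤ r) ∧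
  (∀ q', (∀ q, q' ∈ M.δe (rankDom f) a {q} → f q = none) → f' q' = none)

/-- The rank-based complement of an FANBW, with maximum rank 2 and the reduced
transition function `δ^e`. -/
noncomputable def rankComplement [LinearOrder Q] (M : NBW Q A) :
    NBW ((Q → Option (Fin 3)) × Set Q) A where
  I := {s | s.2 = ∅ ∧ ∀ q, s.1 q = if q ∈ M.I then some 2 else none}
  δ := fun s a =>
    {s' | M.Covers a s.1 s'.1 ∧ M.IsLR s'.1 ∧
      ((s.2 ≠ ∅ ∧
          s'.2 = M.δe (rankDom s.1) a s.2 \ {q | ∃ r, s'.1 q = some r ∧ (r : ℕ) % 2 = 1}) ∨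
       (s.2 = ∅ ∧ s'.2 = {q | ∃ r, s'.1 q = some r ∧ (r : ℕ) % 2 = 0}))}
  F := {s | s.2 = ∅}

/-- Slice-based DAG `G^s_{w,M}`: the set at position `p` of level `l`.
Level `0` consists of `I \ F` (position 0) and `I ∩ F` (position 1); from the
set at position `j` of level `l`, position `2j` of level `l+1` holds the non-`F`
successors and position `2j+1` the `F`-successors, keeping only the rightmost
occurrence of each state. -/
noncomputable def sliceSet (M : NBW Q A) (w : ℕ → A) : ℕ → ℕ → Set Q
  | 0, p => if p = 0 then M.I \ M.F else if p = 1 then M.I ∩ M.F else ∅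
  | l + 1, p =>
      let S' : ℕ → Set Q := fun q =>
        if q % 2 = 0 then M.δset (sliceSet M w l (q / 2)) (w l) \ M.F
        else M.δset (sliceSet M w l (q / 2)) (w l) ∩ M.F
      S' p \ ⋃ q ∈ Set.Ioi p, S' q

/-- An ω-branch of the slice-based DAG `G^s_{w,M}`, given by the positions it visits. -/
def IsSliceBranch (M : NBW Q A) (w : ℕ → A) (g : ℕ → ℕ) : Prop :=
  (∀ l, M.sliceSet w l (g l) ≠ ∅) ∧ ∀ l, g (l + 1) / 2 = g l

/-- There is an infinite branch of `G^s_{w,M}` starting from position `p` of level `l`. -/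
def SliceBranchFrom (M : NBW Q A) (w : ℕ → A) (l p : ℕ) : Prop :=
  ∃ g : ℕ → ℕ, g 0 = p ∧ (∀ i, M.sliceSet w (l + i) (g i) ≠ ∅) ∧ ∀ i, g (i + 1) / 2 = g i

/-- Accepting-phase transition of the `(N,C,B)` construction. -/
noncomputable def ncbStep [LinearOrder Q] (M : NBW Q A) (a : A)
    (t : Set Q × Set Q × Set Q) : Set Q × Set Q × Set Q :=
  (M.δe t.1 a t.1,
   M.δe t.1 a t.2.1 ∪ (M.δe t.1 a t.1 ∩ M.F),
   if t.2.2 = ∅ then M.δe t.1 a t.2.1 ∪ (M.δe t.1 a t.1 ∩ M.F) else M.δe t.1 a t.2.2)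

/-- The slice-based specialized complement of an FANBW: the `(N,C,B)` construction. -/
noncomputable def ncbComplement [LinearOrder Q] (M : NBW Q A) :
    NBW (Set Q ⊕ Set Q × Set Q × Set Q) A where
  I := {Sum.inl M.I}
  δ := fun s a =>
    match s with
    | Sum.inl S => {Sum.inl (M.δe S a S), Sum.inr (M.ncbStep a (S, S ∩ M.F, S ∩ M.F))}
    | Sum.inr t => {Sum.inr (M.ncbStep a t)}
  F := {s | ∃ t : Set Q × Set Q × Set Q, s = Sum.inr t ∧ t.2.2 = ∅}

/-- Trajectory of the deterministic accepting phase of the `(N,C,B)` construction. -/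
noncomputable def ncbTraj [LinearOrder Q] (M : NBW Q A) (w : ℕ → A)
    (t₀ : Set Q × Set Q × Set Q) : ℕ → Set Q × Set Q × Set Q
  | 0 => t₀
  | i + 1 => M.ncbStep (w i) (ncbTraj M w t₀ i)

end NBW

namespace NBWAux

lemma path_to {Q A : Type} {M : NBW Q A} {w : ℕ → A} :
    ∀ l q, q ∈ M.V w l → ∃ ρ : ℕ → Q, ρ 0 ∈ M.I ∧
      (∀ i, i < l → ρ (i + 1) ∈ M.δ (ρ i) (w i)) ∧ ρ l = q := by
  intro l
  induction l with
  | zero => exact fun q hq => ⟨fun _ => q, hq, fun i h => absurd h (Nat.not_lt_zero i), rfl⟩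
  | succ l ih =>
    intro q hq
    simp only [NBW.V, NBW.δset, Set.mem_iUnion] at hq
    obtain ⟨p, hp, hpq⟩ := hq
    obtain ⟨ρ0, h0, hstep, hl⟩ := ih p hp
    refine ⟨fun m => if m ≤ l then ρ0 m else q, by simpa using h0, ?_, by simp⟩
    intro i hi
    rcases Nat.lt_succ_iff_lt_or_eq.mp hi with h | h
    · simpa [h.le, Nat.succ_le_of_lt h] using hstep i h
    · subst h
      simpa [hl] using hpq

lemma swap_run {Q A : Type} {M : NBW Q A} {w : ℕ → A} {b : ℕ → Q} {l : ℕ} {q : Q}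
    (hb : M.IsBranch w b) (hacc : ∀ n, ∃ m ≥ n, b m ∈ M.F)
    (hq : M.Edge w l q (b (l + 1))) :
    ∃ ρ : ℕ → Q, M.IsAccRun w ρ ∧ ρ l = q ∧ ∀ m, l + 1 ≤ m → ρ m = b m := by
  obtain ⟨ρ0, h0, hstep, hl⟩ := path_to l q hq.1
  refine ⟨fun m => if m ≤ l then ρ0 m else b m, ⟨⟨by simpa using h0, ?_⟩, ?_⟩,
    by simpa using hl, fun m hm => by simp [Nat.not_le.mpr hm]⟩
  · intro i
    rcases lt_trichotomy i l with h | h | h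
    · simpa [h.le, Nat.succ_le_of_lt h] using hstep i h
    · subst h
      simpa [hl, Nat.lt_irrefl] using hq.2
    · have h1 : ¬ i ≤ l := Nat.not_le.mpr h
      have h2 : ¬ i + 1 ≤ l := Nat.not_le.mpr (Nat.lt_succ_of_lt h)
      simpa [h1, h2] using (hb.2 i).2
  · intro n
    obtain ⟨m, hm1, hm2⟩ := hacc (max n (l + 1))
    refine ⟨m, le_trans (le_max_left _ _) hm1, ?_⟩
    have : ¬ m ≤ l := Nat.not_le.mpr (lt_of_lt_of_le (Nat.lt_succ_self l)
      (le_trans (le_max_right _ _) hm1))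
    simpa [this] using hm2

end NBWAux

/-- separate levels of accepting DAGs of FANBWs: if `M` is an FANBW and
`w ∈ L(M)`, there is a level `k ≥ 1` such that every vertex at level `≥ k` lying on an
accepting ω-branch of `G_{w,M}` has exactly one predecessor in `G_{w,M}`. -/
theorem separate_level_of_FA
    [Fintype Q] (M : NBW Q A) (hFA : M.FA) (w : ℕ → A) (hw : M.Accepts w) :
    ∃ k ≥ 1, ∀ b : ℕ → Q, M.IsBranch w b → (∀ n, ∃ m ≥ n, b m ∈ M.F) →
      ∀ l : ℕ, k ≤ l + 1 → ∃! q : Q, M.Edge w l q (b (l + 1)) := by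
  classical
  obtain ⟨ρdef, hρdef⟩ := hw
  set S : Set ℕ := {l | ∃ b : ℕ → Q, M.IsBranch w b ∧ (∀ n, ∃ m ≥ n, b m ∈ M.F) ∧
      ¬ ∃! q : Q, M.Edge w l q (b (l + 1))} with hS
  have hSfin : S.Finite := by
    by_contra hinf
    replace hinf : S.Infinite := hinf
    have key : ∀ l, ∃ p : (ℕ → Q) × (ℕ → Q), l ∈ S →
        M.IsAccRun w p.1 ∧ M.IsAccRun w p.2 ∧ p.1 l ≠ p.2 l ∧
          ∀ m, l + 1 ≤ m → p.1 m = p.2 m := by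
      intro l
      by_cases hl : l ∈ S
      · obtain ⟨b, hb, hacc, hnu⟩ := hl
        have hEb : M.Edge w l (b l) (b (l + 1)) := hb.2 l
        have hex : ∃ q, M.Edge w l q (b (l + 1)) ∧ q ≠ b l := by
          by_contra h
          push_neg at h
          exact hnu ⟨b l, hEb, fun y hy => h y hy⟩
        obtain ⟨q, hq, hqne⟩ := hex
        obtain ⟨ρ, hρ, hρl, hρtail⟩ := NBWAux.swap_run hb hacc hq
        exact ⟨(ρ, b), fun _ => ⟨hρ, ⟨⟨hb.1, fun i => (hb.2 i).2⟩, hacc⟩,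
          by simpa [hρl] using hqne, hρtail⟩⟩
      · exact ⟨(ρdef, ρdef), fun h => absurd h hl⟩
    choose f hf using key
    have hfin2 : ({ρ | M.IsAccRun w ρ} ×ˢ {ρ | M.IsAccRun w ρ}).Finite :=
      (hFA w).prod (hFA w)
    obtain ⟨l1, hl1, l2, hl2, hne, heq⟩ :=
      hinf.exists_ne_map_eq_of_mapsTo
        (fun l hl => Set.mk_mem_prod ((hf l hl).1) ((hf l hl).2.1)) hfin2
    have e1 : (f l1).1 = (f l2).1 := congrArg Prod.fst heq
    have e2 : (f l1).2 = (f l2).2 := congrArg Prod.snd heq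
    rcases hne.lt_or_gt with h | h
    · have e := (hf l1 hl1).2.2.2 l2 (Nat.succ_le_of_lt h)
      rw [e1, e2] at e
      exact (hf l2 hl2).2.2.1 e
    · have e := (hf l2 hl2).2.2.2 l1 (Nat.succ_le_of_lt h)
      rw [← e1, ← e2] at e
      exact (hf l1 hl1).2.2.1 e
  obtain ⟨N, hN⟩ := hSfin.bddAbove
  refine ⟨N + 2, by omega, ?_⟩
  intro b hb hacc l hl
  by_contra hnu
  have hmem : l ∈ S := ⟨b, hb, hacc, hnu⟩
  have := hN hmem
  omega
end

section
/- Let A be an FANBW with states Q = {s₁,…,sₙ}, and let G^e_{w,A} be the co-deterministic run DAG obtained from G_{w,A} by keeping, for each vertex with multiple incoming edges, only the edge from the predecessor with minimal index. Then w is accepted by A if and only if G^e_{w,A} contains an accepting ω-branch. -/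
open Classical

variable {Q : Type} {A : Type}

section AuxCodet

variable [Fintype Q] [LinearOrder Q]

/-- The minimal-index predecessor of `q` at level `l`. -/
noncomputable def NBW.predE (M : NBW Q A) (w : ℕ → A) (l : ℕ) (q : Q) : Q :=
  if h : ({p | p ∈ M.V w l ∧ q ∈ M.δ p (w l)}).Nonempty then
    (Set.toFinite _).toFinset.min' ((Set.Finite.toFinset_nonempty _).mpr h)
  else q

theorem NBW.edgeE_predE (M : NBW Q A) (w : ℕ → A) (l : ℕ) (q : Q)
    (hq : q ∈ M.V w (l + 1)) : M.EdgeE w l (M.predE w l q) q := by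
  have hne : ({p | p ∈ M.V w l ∧ q ∈ M.δ p (w l)}).Nonempty := by
    have : q ∈ M.δset (M.V w l) (w l) := hq
    simp only [NBW.δset, Set.mem_iUnion] at this
    obtain ⟨p, hp, hpq⟩ := this
    exact ⟨p, hp, hpq⟩
  rw [NBW.predE, dif_pos hne]
  constructor
  · have := Finset.min'_mem (Set.toFinite _).toFinset
      ((Set.Finite.toFinset_nonempty _).mpr hne)
    simpa using this
  · intro p hp
    exact Finset.min'_le _ _ (by simpa using hp)

/-- Backward trace in `G^e`: `backE l q j` is the vertex at level `l - j`. -/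
noncomputable def NBW.backE (M : NBW Q A) (w : ℕ → A) (l : ℕ) (q : Q) : ℕ → Q
  | 0 => q
  | j + 1 => M.predE w (l - j - 1) (NBW.backE M w l q j)

theorem NBW.backE_mem (M : NBW Q A) (w : ℕ → A) (l : ℕ) (q : Q)
    (hq : q ∈ M.V w l) : ∀ j, j ≤ l → M.backE w l q j ∈ M.V w (l - j) := by
  intro j
  induction j with
  | zero => intro _; simpa [NBW.backE] using hq
  | succ j ih =>
      intro hjl
      have hj : M.backE w l q j ∈ M.V w (l - j) := ih (by omega)
      have heq : l - j = (l - j - 1) + 1 := by omega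
      rw [heq] at hj
      have := M.edgeE_predE w (l - j - 1) (M.backE w l q j) hj
      have hmem := this.1.1
      have : l - (j + 1) = l - j - 1 := by omega
      rw [this]
      exact hmem

theorem NBW.backE_edge (M : NBW Q A) (w : ℕ → A) (l : ℕ) (q : Q)
    (hq : q ∈ M.V w l) (j : ℕ) (hjl : j + 1 ≤ l) :
    M.EdgeE w (l - j - 1) (M.backE w l q (j + 1)) (M.backE w l q j) := by
  have hj : M.backE w l q j ∈ M.V w (l - j) := M.backE_mem w l q hq j (by omega)
  have heq : l - j = (l - j - 1) + 1 := by omega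
  rw [heq] at hj
  exact M.edgeE_predE w (l - j - 1) (M.backE w l q j) hj

/-- The run obtained by replacing the prefix of `ρ` up to `m` by the backward trace
in `G^e` from `⟨ρ m, m⟩`. -/
noncomputable def NBW.runE (M : NBW Q A) (w : ℕ → A) (ρ : ℕ → Q) (m k : ℕ) : Q :=
  if k ≤ m then M.backE w m (ρ m) (m - k) else ρ k

theorem NBW.runE_edgeE (M : NBW Q A) (w : ℕ → A) (ρ : ℕ → Q) (m : ℕ)
    (hm : ρ m ∈ M.V w m) (l : ℕ) (hl : l + 1 ≤ m) :
    M.EdgeE w l (M.runE w ρ m l) (M.runE w ρ m (l + 1)) := by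
  have h1 : M.runE w ρ m l = M.backE w m (ρ m) (m - l) := by
    rw [NBW.runE, if_pos (by omega)]
  have h2 : M.runE w ρ m (l + 1) = M.backE w m (ρ m) (m - (l + 1)) := by
    rw [NBW.runE, if_pos (by omega)]
  have he := M.backE_edge w m (ρ m) hm (m - (l + 1)) (by omega)
  have e1 : m - (m - (l + 1)) - 1 = l := by omega
  have e2 : m - (l + 1) + 1 = m - l := by omega
  rw [e1, e2] at he
  rw [h1, h2]
  exact he

theorem NBW.runE_eq_of_ge (M : NBW Q A) (w : ℕ → A) (ρ : ℕ → Q) (m k : ℕ)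
    (hk : m ≤ k) : M.runE w ρ m k = ρ k := by
  rw [NBW.runE]
  split_ifs with h
  · have : k = m := by omega
    subst this
    simp [NBW.backE]
  · rfl

omit [Fintype Q] [LinearOrder Q] in
theorem NBW.mem_V_of_run (M : NBW Q A) (w : ℕ → A) (ρ : ℕ → Q)
    (hρ : M.IsRun w ρ) : ∀ m, ρ m ∈ M.V w m := by
  intro m
  induction m with
  | zero => exact hρ.1
  | succ m ih =>
      show ρ (m + 1) ∈ M.δset (M.V w m) (w m)
      simp only [NBW.δset, Set.mem_iUnion]
      exact ⟨ρ m, ih, hρ.2 m⟩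

theorem NBW.runE_acc (M : NBW Q A) (w : ℕ → A) (ρ : ℕ → Q)
    (hρ : M.IsAccRun w ρ) (m : ℕ) : M.IsAccRun w (M.runE w ρ m) := by
  have hm : ρ m ∈ M.V w m := M.mem_V_of_run w ρ hρ.1 m
  refine ⟨⟨?_, ?_⟩, ?_⟩
  · have h0 : M.runE w ρ m 0 = M.backE w m (ρ m) m := by
      rw [NBW.runE, if_pos (Nat.zero_le m), Nat.sub_zero]
    rw [h0]
    have := M.backE_mem w m (ρ m) hm m le_rfl
    simpa [NBW.V] using this
  · intro k
    by_cases h : k + 1 ≤ m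
    · exact (M.runE_edgeE w ρ m hm k h).1.2
    · rw [M.runE_eq_of_ge w ρ m k (by omega), M.runE_eq_of_ge w ρ m (k + 1) (by omega)]
      exact hρ.1.2 k
  · intro n
    obtain ⟨m', hm', hF⟩ := hρ.2 (max n (m + 1))
    refine ⟨m', le_trans (le_max_left _ _) hm', ?_⟩
    rw [M.runE_eq_of_ge w ρ m m' (by omega)]
    exact hF

end AuxCodet

/-- acceptance of co-deterministic DAGs: for an FANBW `M`, a word `w` is
accepted by `M` iff the co-deterministic run DAG `G^e_{w,M}` (keeping only the edge from
the minimal-index predecessor) contains an accepting ω-branch. -/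
theorem accepts_iff_codet_dag_accepting
    [Fintype Q] [LinearOrder Q] (M : NBW Q A) (hFA : M.FA) (w : ℕ → A) :
    M.Accepts w ↔ ∃ b, M.IsBranchE w b ∧ ∀ n, ∃ m ≥ n, b m ∈ M.F := by
  constructor
  · rintro ⟨ρ, hρ⟩
    -- each `runE ρ m` is an accepting run; by finite ambiguity one of them
    -- occurs for infinitely many `m`, and that run is a branch of `G^e`.
    obtain ⟨σ, hσ⟩ : ∃ σ, {m : ℕ | M.runE w ρ m = σ}.Infinite := by
      by_contra h
      push_neg at h
      have hfin : (⋃ σ ∈ {τ | M.IsAccRun w τ}, {m : ℕ | M.runE w ρ m = σ}).Finite :=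
        (hFA w).biUnion (fun σ _ => h σ)
      have hsub : (Set.univ : Set ℕ) ⊆
          ⋃ σ ∈ {τ | M.IsAccRun w τ}, {m : ℕ | M.runE w ρ m = σ} := by
        intro m _
        exact Set.mem_biUnion (M.runE_acc w ρ hρ m) rfl
      exact Set.infinite_univ (hfin.subset hsub)
    obtain ⟨m0, hm0⟩ := hσ.nonempty
    have hσacc : M.IsAccRun w σ := hm0 ▸ M.runE_acc w ρ hρ m0
    refine ⟨σ, ⟨hσacc.1.1, ?_⟩, hσacc.2⟩
    intro l
    obtain ⟨m, hmmem, hml⟩ := hσ.exists_gt (l + 1)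
    have := M.runE_edgeE w ρ m (M.mem_V_of_run w ρ hρ.1 m) l (by omega)
    rwa [hmmem] at this
  · rintro ⟨b, ⟨hb0, hbe⟩, hbF⟩
    exact ⟨b, ⟨⟨hb0, fun i => (hbe i).1.2⟩, hbF⟩⟩
end

section
/- In the co-deterministic run DAG G^e_{w,A} of an NBW A with n states, every vertex has at most one predecessor, and consequently the number of ω-branches of G^e_{w,A} is at most n. -/
open Classical

variable {Q : Type} {A : Type}

/-- in the co-deterministic run DAG `G^e_{w,M}` every vertex has at most
one predecessor, and consequently the number of ω-branches of `G^e_{w,M}` is at most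
`n = |Q|`. -/
theorem codet_dag_unique_pred_and_branch_bound
    [Fintype Q] [LinearOrder Q] (M : NBW Q A) (w : ℕ → A) :
    (∀ (l : ℕ) (q' : Q), {q | M.EdgeE w l q q'}.Subsingleton) ∧
    {b : ℕ → Q | M.IsBranchE w b}.Finite ∧
    {b : ℕ → Q | M.IsBranchE w b}.ncard ≤ Fintype.card Q := by
  classical
  have hpred : ∀ (l : ℕ) (q' : Q), {q | M.EdgeE w l q q'}.Subsingleton := by
    intro l q' x hx y hy
    exact hx.unique hy
  refine ⟨hpred, ?_⟩
  set S := {b : ℕ → Q | M.IsBranchE w b} with hS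
  have back : ∀ b ∈ S, ∀ b' ∈ S, ∀ m, b m = b' m → ∀ k ≤ m, b k = b' k := by
    intro b hb b' hb' m
    induction m with
    | zero =>
      intro h k hk
      interval_cases k
      exact h
    | succ m ih =>
      intro h k hk
      have hm : b m = b' m := by
        have e1 := hb.2 m
        have e2 := hb'.2 m
        rw [h] at e1
        exact e1.unique e2
      rcases Nat.lt_succ_iff_lt_or_eq.mp (Nat.lt_succ_of_le hk) with h' | h'
      · exact ih hm k (Nat.lt_succ_iff.mp h')
      · rw [h']; exact h
  have hex : ∀ b b' : ℕ → Q, b ≠ b' → ∃ l, b l ≠ b' l := by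
    intro b b' h
    by_contra hc
    push_neg at hc
    exact h (funext hc)
  have key : ∀ T : Finset (ℕ → Q), ↑T ⊆ S → T.card ≤ Fintype.card Q := by
    intro T hT
    set f : (ℕ → Q) × (ℕ → Q) → ℕ := fun p =>
      if h : p.1 ≠ p.2 then Nat.find (hex p.1 p.2 h) else 0 with hf
    set L := (T ×ˢ T).sup f with hL
    have hinj : Set.InjOn (fun b : ℕ → Q => b L) (↑T : Set (ℕ → Q)) := by
      intro b hb b' hb' hEq
      by_contra hne
      have hmem : (b, b') ∈ (T ×ˢ T : Finset _) :=
        Finset.mem_product.mpr ⟨Finset.mem_coe.mp hb, Finset.mem_coe.mp hb'⟩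
      have hle : f (b, b') ≤ L := Finset.le_sup hmem
      have heq2 : b (f (b, b')) = b' (f (b, b')) :=
        back b (hT hb) b' (hT hb') L hEq (f (b, b')) hle
      have hne2 : b (f (b, b')) ≠ b' (f (b, b')) := by
        simp only [hf, dif_pos hne]
        exact Nat.find_spec (hex b b' hne)
      exact hne2 heq2
    calc T.card = (T.image (fun b => b L)).card :=
          (Finset.card_image_of_injOn hinj).symm
      _ ≤ Fintype.card Q := Finset.card_le_univ _
  have hfin : S.Finite := by
    by_contra h
    obtain ⟨T, hTs, hTc⟩ := Set.Infinite.exists_subset_card_eq h (Fintype.card Q + 1)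
    have := key T hTs
    omega
  refine ⟨hfin, ?_⟩
  have hcoe : ↑hfin.toFinset ⊆ S := by simp
  have := key hfin.toFinset hcoe
  rwa [Set.ncard_eq_toFinset_card S hfin]
end

section
/- Let A be an FANBW and G^e_{w,A} the co-deterministic run DAG of A over w. Then w ∉ L(A) if and only if there exists a stable level k > 0 in G^e_{w,A}, i.e., a level such that every F-vertex at a level ≥ k is finite (no ω-branch of G^e_{w,A} starts from it). -/
open Classical

variable {Q : Type} {A : Type}

section Aux

set_option linter.unusedSectionVars false

variable [Fintype Q] [LinearOrder Q] (M : NBW Q A) (w : ℕ → A)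

lemma aux_run_mem_V {ρ : ℕ → Q} (h : M.IsRun w ρ) : ∀ i, ρ i ∈ M.V w i := by
  intro i
  induction i with
  | zero => exact h.1
  | succ n ih => exact Set.mem_biUnion ih (h.2 n)

lemma aux_exists_path : ∀ (l : ℕ) (q : Q), q ∈ M.V w l →
    ∃ p : ℕ → Q, p l = q ∧ p 0 ∈ M.I ∧ ∀ i < l, p (i + 1) ∈ M.δ (p i) (w i) := by
  intro l
  induction l with
  | zero =>
    intro q h
    exact ⟨fun _ => q, rfl, h, fun i hi => absurd hi (Nat.not_lt_zero i)⟩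
  | succ l ih =>
    intro q h
    obtain ⟨p', hp'V, hq⟩ : ∃ p' ∈ M.V w l, q ∈ M.δ p' (w l) := by
      simpa [NBW.V, NBW.δset] using h
    obtain ⟨p, hpl, hpI, hpE⟩ := ih p' hp'V
    refine ⟨Function.update p (l + 1) q, Function.update_self _ _ _, ?_, ?_⟩
    · rwa [Function.update_of_ne (by omega)]
    · intro i hi
      rcases Nat.lt_succ_iff_lt_or_eq.mp hi with hi' | hi'
      · rw [Function.update_of_ne (by omega), Function.update_of_ne (by omega)]
        exact hpE i hi'
      · subst hi'
        rw [Function.update_self, Function.update_of_ne (by omega), hpl]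
        exact hq

lemma aux_exists_least {l : ℕ} {q' : Q}
    (h : ({p | p ∈ M.V w l ∧ q' ∈ M.δ p (w l)} : Set Q).Nonempty) :
    ∃ p, M.EdgeE w l p q' := by
  obtain ⟨p, hp, hmin⟩ := Set.exists_min_image _ id (Set.toFinite _) h
  exact ⟨p, hp, fun x hx => hmin x hx⟩

lemma aux_exists_edgeE {l : ℕ} {q' : Q} (h : q' ∈ M.V w (l + 1)) :
    ∃ p, M.EdgeE w l p q' := by
  apply aux_exists_least
  simpa [NBW.V, NBW.δset, Set.Nonempty] using h

lemma aux_back_extend : ∀ (l : ℕ) (q : Q) (b : ℕ → Q), M.BranchFromE w l q b →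
    ∃ c, M.IsBranchE w c ∧ ∀ i, c (l + i) = b i := by
  intro l
  induction l with
  | zero =>
    intro q b hb
    refine ⟨b, ⟨hb.1 ▸ hb.2.1, fun i => by simpa using hb.2.2 i⟩, fun i => by simp⟩
  | succ l ih =>
    intro q b hb
    obtain ⟨p, hpE⟩ := aux_exists_edgeE M w hb.2.1
    have hb0 : b 0 = q := hb.1
    set b' : ℕ → Q := fun i => match i with | 0 => p | (i + 1) => b i with hb'
    have hbr : M.BranchFromE w l p b' := by
      refine ⟨rfl, hpE.1.1, ?_⟩
      intro i
      match i with
      | 0 => simpa [hb', hb0] using hpE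
      | (i + 1) =>
        have := hb.2.2 i
        simpa [hb', show l + (i + 1) = l + 1 + i by omega] using this
    obtain ⟨c, hc, hci⟩ := ih p b' hbr
    refine ⟨c, hc, fun i => ?_⟩
    have := hci (i + 1)
    rwa [show l + (i + 1) = l + 1 + i by omega] at this

lemma aux_branch_eq_of_eq {b b' : ℕ → Q} (hb : M.IsBranchE w b)
    (hb' : M.IsBranchE w b') :
    ∀ n, b n = b' n → ∀ m ≤ n, b m = b' m := by
  intro n
  induction n with
  | zero =>
    intro h m hm
    have : m = 0 := Nat.le_zero.mp hm
    subst this; exact h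
  | succ n ih =>
    intro h m hm
    have hn : b n = b' n := by
      have h1 := hb.2 n
      have h2 := hb'.2 n
      rw [h] at h1
      exact IsLeast.unique h1 h2
    rcases eq_or_lt_of_le hm with hm' | hm'
    · subst hm'; exact h
    · exact ih hn m (by omega)

lemma aux_diverge {b b' : ℕ → Q} (hb : M.IsBranchE w b) (hb' : M.IsBranchE w b')
    (hne : b ≠ b') : ∃ N, ∀ n ≥ N, b n ≠ b' n := by
  obtain ⟨N, hN⟩ := Function.ne_iff.mp hne
  exact ⟨N, fun n hn he => hN (aux_branch_eq_of_eq M w hb hb' n he N hn)⟩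

lemma aux_branches_finite : {b | M.IsBranchE w b}.Finite := by
  by_contra hinf
  have hinf' : Set.Infinite {b | M.IsBranchE w b} := hinf
  obtain ⟨t, hts, htc⟩ := hinf'.exists_subset_card_eq (Fintype.card Q + 1)
  classical
  set D : (ℕ → Q) → (ℕ → Q) → ℕ :=
    fun b b' => if h : ∃ N, ∀ n ≥ N, b n ≠ b' n then h.choose else 0 with hD
  set N : ℕ := t.sup (fun b => t.sup (D b)) with hN
  have hinj : Set.InjOn (fun b : ℕ → Q => b N) ↑t := by
    intro b hbt b' hb't hEq
    by_contra hne
    have hdiv : ∃ K, ∀ n ≥ K, b n ≠ b' n :=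
      aux_diverge M w (hts hbt) (hts hb't) hne
    have hprop : ∀ n ≥ D b b', b n ≠ b' n := by
      rw [hD]; simp only [hdiv, dif_pos]
      exact hdiv.choose_spec
    have hle1 : D b b' ≤ t.sup (D b) := Finset.le_sup hb't
    have hle2 : t.sup (D b) ≤ N := Finset.le_sup (f := fun b => t.sup (D b)) hbt
    have hle : D b b' ≤ N := le_trans hle1 hle2
    exact hprop N hle hEq
  have h1 : (t.image fun b => b N).card = t.card :=
    Finset.card_image_of_injOn hinj
  have h2 : (t.image fun b => b N).card ≤ Fintype.card Q :=
    Finset.card_le_univ _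
  have h3 : Fintype.card Q + 1 ≤ Fintype.card Q := by
    calc Fintype.card Q + 1 = t.card := htc.symm
      _ = (t.image fun b => b N).card := h1.symm
      _ ≤ Fintype.card Q := h2
  exact Nat.not_succ_le_self _ h3

end Aux

/-- stable level in nonaccepting co-deterministic DAGs: for an FANBW `M`,
`w ∉ L(M)` iff there exists a stable level `k > 0` in `G^e_{w,M}`, i.e. every `F`-vertex
at a level `≥ k` is finite (no infinite branch of `G^e_{w,M}` starts from it). -/
theorem not_accepts_iff_stable_level
    [Fintype Q] [LinearOrder Q] (M : NBW Q A) (hFA : M.FA) (w : ℕ → A) :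
    ¬ M.Accepts w ↔
      ∃ k > 0, ∀ l ≥ k, ∀ q ∈ M.V w l, q ∈ M.F → M.FiniteVertexE w l q := by
  constructor
  · -- ¬ Accepts → stable level exists
    intro hna
    by_contra hns
    push_neg at hns
    apply hna
    have key : ∀ k : ℕ, ∃ (l : ℕ) (c : ℕ → Q),
        k ≤ l ∧ M.IsBranchE w c ∧ c l ∈ M.F := by
      intro k
      obtain ⟨l, hlk, q, hqV, hqF, hnf⟩ := hns (k + 1) (Nat.succ_pos k)
      rw [NBW.FiniteVertexE, not_not] at hnf
      obtain ⟨b, hb⟩ := hnf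
      obtain ⟨c, hc, hci⟩ := aux_back_extend M w l q b hb
      refine ⟨l, c, by omega, hc, ?_⟩
      have hcl : c l = q := by simpa [hb.1] using hci 0
      rw [hcl]; exact hqF
    choose l c hlk hbr hF using key
    haveI : Finite {b // M.IsBranchE w b} := (aux_branches_finite M w).to_subtype
    obtain ⟨y, hfib⟩ := Finite.exists_infinite_fiber
      (fun k => (⟨c k, hbr k⟩ : {b // M.IsBranchE w b}))
    have hfib' : {k | c k = y.1}.Infinite := by
      have h1 : ((fun k => (⟨c k, hbr k⟩ : {b // M.IsBranchE w b})) ⁻¹' {y}).Infinite :=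
        Set.infinite_coe_iff.mp hfib
      refine h1.mono ?_
      intro k hk
      simp only [Set.mem_preimage, Set.mem_singleton_iff] at hk
      exact congrArg Subtype.val hk
    have hy := y.2
    refine ⟨y.1, ⟨⟨hy.1, fun i => (hy.2 i).1.2⟩, ?_⟩⟩
    intro n
    obtain ⟨k, hk, hkn⟩ := hfib'.exists_gt n
    refine ⟨l k, by have := hlk k; omega, ?_⟩
    have : c k (l k) ∈ M.F := hF k
    rwa [hk] at this
  · -- stable level → ¬ Accepts
    rintro ⟨k, hk, hstable⟩ ⟨ρ, hρrun, hρacc⟩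
    set B : Set ℕ := {i | ¬ M.EdgeE w i (ρ i) (ρ (i + 1))} with hB
    have hσ : ∀ i : ℕ, ∃ σ : ℕ → Q, i ∈ B →
        M.IsAccRun w σ ∧ σ i ≠ ρ i ∧ ∀ j > i, σ j = ρ j := by
      intro i
      by_cases hi : i ∈ B
      · have hmem : ρ i ∈ {p | p ∈ M.V w i ∧ ρ (i + 1) ∈ M.δ p (w i)} :=
          ⟨aux_run_mem_V M w hρrun i, hρrun.2 i⟩
        obtain ⟨p, hpE⟩ := aux_exists_least M w ⟨ρ i, hmem⟩
        have hpne : p ≠ ρ i := by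
          intro hEq
          exact hi (hEq ▸ hpE)
        obtain ⟨pth, hpl, hpI, hpEdges⟩ := aux_exists_path M w i p hpE.1.1
        refine ⟨fun j => if j ≤ i then pth j else ρ j, fun _ => ⟨⟨⟨?_, ?_⟩, ?_⟩, ?_, ?_⟩⟩
        · simpa using hpI
        · intro j
          beta_reduce
          by_cases hj1 : j + 1 ≤ i
          · rw [if_pos hj1, if_pos (by omega)]
            exact hpEdges j (by omega)
          · by_cases hj2 : j ≤ i
            · have hji : j = i := by omega
              subst hji
              rw [if_neg hj1, if_pos hj2, hpl]
              exact hpE.1.2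
            · rw [if_neg hj1, if_neg hj2]
              exact hρrun.2 j
        · intro n
          obtain ⟨m, hm, hmF⟩ := hρacc (max n (i + 1))
          refine ⟨m, by omega, ?_⟩
          beta_reduce
          rw [if_neg (by omega)]
          exact hmF
        · beta_reduce; rw [if_pos le_rfl, hpl]; exact hpne
        · intro j hj; beta_reduce; rw [if_neg (by omega)]
      · exact ⟨ρ, fun h => absurd h hi⟩
    choose σ hσ using hσ
    have hBfin : B.Finite := by
      have himg : (σ '' B).Finite := (hFA w).subset (by
        rintro _ ⟨i, hi, rfl⟩
        exact (hσ i hi).1)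
      refine Set.Finite.of_finite_image himg ?_
      intro i hi i' hi' hEq
      by_contra hne
      rcases Nat.lt_or_ge i i' with hlt | hge
      · have h1 : σ i i' = ρ i' := (hσ i hi).2.2 i' hlt
        have h2 : σ i' i' ≠ ρ i' := (hσ i' hi').2.1
        rw [hEq] at h1
        exact h2 h1
      · have hlt : i' < i := by omega
        have h1 : σ i' i = ρ i := (hσ i' hi').2.2 i hlt
        have h2 : σ i i ≠ ρ i := (hσ i hi).2.1
        rw [← hEq] at h1
        exact h2 h1
    obtain ⟨N, hN⟩ := hBfin.bddAbove
    have hedge : ∀ i, N + 1 ≤ i → M.EdgeE w i (ρ i) (ρ (i + 1)) := by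
      intro i hi
      by_contra hcon
      have : i ≤ N := hN hcon
      omega
    obtain ⟨m, hm, hmF⟩ := hρacc (max k (N + 1))
    have hfin := hstable m (by omega) (ρ m) (aux_run_mem_V M w hρrun m) hmF
    apply hfin
    refine ⟨fun i => ρ (m + i), rfl, aux_run_mem_V M w hρrun m, fun i => ?_⟩
    exact hedge (m + i) (by omega)
end

section
/- For an NBW A, A rejects a word w if and only if the unique ranking function f on G_{w,A} — assigning rank 2i to vertices finite in G^{2i} and rank 2i+1 to F-free vertices of G^{2i+1}, where G⁰ = G_{w,A}, G^{2i+1} removes finite vertices of G^{2i} and G^{2i+2} removes F-free vertices of G^{2i+1} — has maximum rank at most 2n (n = |Q|) with G^{2n+1} empty, and every ω-branch of G_{w,A} eventually gets trapped in odd ranks. -/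
open Classical

variable {Q : Type} {A : Type}

/-! ### Auxiliary development for the ranking argument -/

section RankingAux

open Relation

namespace RankAux

variable {α : Type}

/-- `n`-step iteration of a relation. -/
def stepN (r : α → α → Prop) : ℕ → α → α → Prop
  | 0 => Eq
  | n + 1 => fun a c => ∃ b, r a b ∧ stepN r n b c

lemma stepN_tail {r : α → α → Prop} : ∀ {n a b c}, stepN r n a b → r b c → stepN r (n + 1) a c := by
  intro n
  induction n with
  | zero => intro a b c h hr; cases h; exact ⟨c, hr, rfl⟩
  | succ n ih =>
    intro a b c h hr
    obtain ⟨d, hd, hs⟩ := h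
    exact ⟨d, hd, ih hs hr⟩

lemma exists_stepN_of_reflTransGen {r : α → α → Prop} {a b : α}
    (h : ReflTransGen r a b) : ∃ n, stepN r n a b := by
  induction h with
  | refl => exact ⟨0, rfl⟩
  | tail _ hr ih => obtain ⟨n, hs⟩ := ih; exact ⟨n + 1, stepN_tail hs hr⟩

/-- Choice of a successor, preferring one that decreases `d`. -/
noncomputable def gnext (R : α → α → Prop) (d : α → ℕ) (v : α) : α :=
  if h : ∃ v', R v v' ∧ d v' < d v then h.choose
  else if h2 : ∃ v', R v v' then h2.choose else v

lemma gnext_rel {R : α → α → Prop} {d : α → ℕ} {v : α} (h2 : ∃ v', R v v') :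
    R v (gnext R d v) := by
  by_cases h : ∃ v', R v v' ∧ d v' < d v
  · rw [gnext, dif_pos h]
    exact h.choose_spec.1
  · rw [gnext, dif_neg h, dif_pos h2]
    exact h2.choose_spec

lemma gnext_dec {R : α → α → Prop} {d : α → ℕ} {v : α}
    (h : ∃ v', R v v' ∧ d v' < d v) : d (gnext R d v) < d v := by
  unfold gnext
  rw [dif_pos h]
  exact h.choose_spec.2

end RankAux

open RankAux

variable {Q A : Type}

lemma dagBranchIn_shift {E : ℕ → Q → Q → Prop} {U : Set (Q × ℕ)} {v : Q × ℕ} {b : ℕ → Q}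
    (hb : DagBranchIn E U v b) (j : ℕ) :
    DagBranchIn E U (b j, v.2 + j) (fun t => b (j + t)) := by
  obtain ⟨h0, hU, hE⟩ := hb
  refine ⟨rfl, fun t => ?_, fun t => ?_⟩
  · have := hU (j + t)
    simpa [add_assoc] using this
  · have := hE (j + t)
    simpa [add_assoc] using this

lemma not_dagFiniteIn_of_branch {E : ℕ → Q → Q → Prop} {U : Set (Q × ℕ)} {v : Q × ℕ} {b : ℕ → Q}
    (hb : DagBranchIn E U v b) (j : ℕ) : ¬ DagFiniteIn E U (b j, v.2 + j) :=
  fun h => h ⟨_, dagBranchIn_shift hb j⟩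

lemma exists_dagStep_of_not_finite {E : ℕ → Q → Q → Prop} {U : Set (Q × ℕ)} {v : Q × ℕ}
    (h : ¬ DagFiniteIn E U v) : ∃ v', DagStep E U v v' := by
  rw [DagFiniteIn, not_not] at h
  obtain ⟨b, h0, hU, hE⟩ := h
  refine ⟨(b 1, v.2 + 1), ?_, by simpa using hU 1, rfl, ?_⟩
  · have := hU 0; simpa [h0] using this
  · have := hE 0; simpa [h0] using this

lemma mem_of_not_dagFiniteIn {E : ℕ → Q → Q → Prop} {U : Set (Q × ℕ)} {v : Q × ℕ}
    (h : ¬ DagFiniteIn E U v) : v ∈ U := by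
  rw [DagFiniteIn, not_not] at h
  obtain ⟨b, h0, hU, hE⟩ := h
  have := hU 0
  simpa [h0] using this

lemma dagFFreeIn_step {E : ℕ → Q → Q → Prop} {U : Set (Q × ℕ)} {F : Set Q} {v v' : Q × ℕ}
    (hlive : ∀ u ∈ U, ¬ DagFiniteIn E U u)
    (hf : DagFFreeIn E U F v) (hs : DagStep E U v v') : DagFFreeIn E U F v' :=
  ⟨hlive v' hs.2.1, fun v'' h => hf.2 v'' (ReflTransGen.head hs h)⟩

/-- States along a run (or branch) lie in the levels of the run DAG. -/
lemma mem_V_of_steps (M : NBW Q A) (w : ℕ → A) {ρ : ℕ → Q}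
    (h0 : ρ 0 ∈ M.I) (hs : ∀ l, ρ (l + 1) ∈ M.δ (ρ l) (w l)) :
    ∀ l, ρ l ∈ M.V w l := by
  intro l
  induction l with
  | zero => exact h0
  | succ l ih => exact Set.mem_biUnion ih (hs l)

/-- Every vertex of the run DAG is reachable from level 0. -/
lemma exists_prefix (M : NBW Q A) (w : ℕ → A) :
    ∀ l (q : Q), q ∈ M.V w l → ∃ ρ : ℕ → Q, ρ 0 ∈ M.I ∧ ρ l = q ∧
      ∀ j < l, ρ (j + 1) ∈ M.δ (ρ j) (w j) := by
  intro l
  induction l with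
  | zero => exact fun q hq => ⟨fun _ => q, hq, rfl, fun j hj => absurd hj (Nat.not_lt_zero j)⟩
  | succ l ih =>
    intro q hq
    obtain ⟨p, hp, hq'⟩ : ∃ p ∈ M.V w l, q ∈ M.δ p (w l) := by
      simpa [NBW.V, NBW.δset] using hq
    obtain ⟨ρ, h0, hl, hstep⟩ := ih p hp
    refine ⟨fun j => if j ≤ l then ρ j else q, by simpa using h0, by simp, ?_⟩
    intro j hj
    rcases Nat.lt_succ_iff_lt_or_eq.mp hj with hj' | hj'
    · simp only [if_pos hj'.le, if_pos (Nat.succ_le_of_lt hj')]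
      exact hstep j hj'
    · subst hj'
      simp only [le_refl, if_pos, if_neg (by omega : ¬ j + 1 ≤ j)]
      rw [hl]
      exact hq'

/-- If in a sub-DAG `U` every vertex has a successor and can reach an `F`-vertex,
and `U` is nonempty, then `M` accepts `w`. -/
lemma accepts_of_no_ffree (M : NBW Q A) (w : ℕ → A) (U : Set (Q × ℕ))
    (hsub : U ⊆ M.DagVertices w)
    (hlive : ∀ v ∈ U, ∃ v', DagStep (M.Edge w) U v v')
    (hreach : ∀ v ∈ U, ∃ v', ReflTransGen (DagStep (M.Edge w) U) v v' ∧ v'.1 ∈ M.F)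
    (hne : U.Nonempty) : M.Accepts w := by
  classical
  set R := DagStep (M.Edge w) U with hR
  set d : Q × ℕ → ℕ := fun v => sInf {n | ∃ v', stepN R n v v' ∧ v'.1 ∈ M.F} with hd
  have hdmem : ∀ v ∈ U, ∃ v', stepN R (d v) v v' ∧ v'.1 ∈ M.F := by
    intro v hv
    obtain ⟨v', hr, hF⟩ := hreach v hv
    obtain ⟨n, hs⟩ := exists_stepN_of_reflTransGen hr
    exact Nat.sInf_mem (⟨n, v', hs, hF⟩ : {n | ∃ v', stepN R n v v' ∧ v'.1 ∈ M.F}.Nonempty)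
  have hdzero : ∀ v ∈ U, d v = 0 → v.1 ∈ M.F := by
    intro v hv h0
    obtain ⟨v', hs, hF⟩ := hdmem v hv
    rw [h0] at hs
    cases hs
    exact hF
  have hddec : ∀ v ∈ U, 0 < d v → ∃ v', R v v' ∧ d v' < d v := by
    intro v hv hpos
    obtain ⟨v', hs, hF⟩ := hdmem v hv
    obtain ⟨k, hk⟩ : ∃ k, d v = k + 1 := ⟨d v - 1, by omega⟩
    rw [hk] at hs
    obtain ⟨u, hRu, hsu⟩ := hs
    have : d u ≤ k := Nat.sInf_le ⟨v', hsu, hF⟩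
    exact ⟨u, hRu, by omega⟩
  set g : Q × ℕ → Q × ℕ := gnext R d with hg
  have hgR : ∀ v ∈ U, R v (g v) := fun v hv => gnext_rel (hlive v hv)
  have hiter : ∀ k, g^[k] hne.choose ∈ U ∧ (g^[k] hne.choose).2 = hne.choose.2 + k := by
    intro k
    induction k with
    | zero => exact ⟨hne.choose_spec, rfl⟩
    | succ k ih =>
      rw [Function.iterate_succ_apply']
      have hstep := hgR _ ih.1
      exact ⟨hstep.2.1, by rw [hstep.2.2.1, ih.2]; omega⟩

  have hhit : ∀ m (v : Q × ℕ), v ∈ U → d v ≤ m → ∃ k ≤ m, (g^[k] v).1 ∈ M.F := by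
    intro m
    induction m with
    | zero => exact fun v hv hdv => ⟨0, le_refl 0, hdzero v hv (by omega)⟩
    | succ m ih =>
      intro v hv hdv
      by_cases h0 : d v = 0
      · exact ⟨0, by omega, hdzero v hv h0⟩
      · have hpos : 0 < d v := by omega
        have hdec : d (g v) < d v := gnext_dec (hddec v hv hpos)
        have hgU : g v ∈ U := (hgR v hv).2.1
        obtain ⟨k, hk, hF⟩ := ih (g v) hgU (by omega)
        exact ⟨k + 1, by omega, by rw [Function.iterate_succ_apply]; exact hF⟩
  have hio : ∀ N, ∃ k ≥ N, (g^[k] hne.choose).1 ∈ M.F := by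
    intro N
    obtain ⟨k, hk, hF⟩ := hhit (d (g^[N] hne.choose)) _ (hiter N).1 le_rfl
    refine ⟨k + N, Nat.le_add_left N k, ?_⟩
    rw [Function.iterate_add_apply]
    exact hF
  -- build the accepting run
  set v₀ := hne.choose with hv₀def
  have hv₀V : v₀.1 ∈ M.V w v₀.2 := hsub hne.choose_spec
  obtain ⟨ρ, hρ0, hρl, hρstep⟩ := exists_prefix M w v₀.2 v₀.1 hv₀V
  set σ : ℕ → Q := fun j => if j ≤ v₀.2 then ρ j else (g^[j - v₀.2] v₀).1 with hσ
  have hσ_at : ∀ j, v₀.2 ≤ j → σ j = (g^[j - v₀.2] v₀).1 := by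
    intro j hj
    by_cases hje : j = v₀.2
    · subst hje
      simp [hσ, hρl]
    · have : ¬ j ≤ v₀.2 := by omega
      simp [hσ, this]
  refine ⟨σ, ⟨⟨by simp [hσ, hρ0], ?_⟩, ?_⟩⟩
  · intro j
    by_cases hj : j < v₀.2
    · simp only [hσ, if_pos hj.le, if_pos (Nat.succ_le_of_lt hj)]
      exact hρstep j hj
    · have hj' : v₀.2 ≤ j := by omega
      rw [hσ_at j hj', hσ_at (j + 1) (by omega)]
      have hstep := hgR _ (hiter (j - v₀.2)).1
      have hlev : (g^[j - v₀.2] v₀).2 = j := by rw [(hiter (j - v₀.2)).2]; omega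
      have hidx : j + 1 - v₀.2 = (j - v₀.2) + 1 := by omega
      rw [hidx, Function.iterate_succ_apply']
      have hE := hstep.2.2.2
      rw [hlev] at hE
      exact hE.2
  · intro n
    obtain ⟨k, hk, hF⟩ := hio (n + 1)
    refine ⟨v₀.2 + k, by omega, ?_⟩
    rw [hσ_at (v₀.2 + k) (by omega)]
    have : v₀.2 + k - v₀.2 = k := by omega
    rw [this]
    exact hF

/-- The stripping sequence on the run DAG. -/
def Gs (M : NBW Q A) (w : ℕ → A) : ℕ → Set (Q × ℕ) :=
  DagStrip (M.Edge w) M.F (M.DagVertices w)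

lemma Gs_succ_even (M : NBW Q A) (w : ℕ → A) {j : ℕ} (hj : j % 2 = 0) :
    Gs M w (j + 1) = Gs M w j \ {v | DagFiniteIn (M.Edge w) (Gs M w j) v} := by
  simp [Gs, DagStrip, hj]

lemma Gs_succ_odd (M : NBW Q A) (w : ℕ → A) {j : ℕ} (hj : j % 2 = 1) :
    Gs M w (j + 1) = Gs M w j \ {v | DagFFreeIn (M.Edge w) (Gs M w j) M.F v} := by
  simp [Gs, DagStrip, hj]

lemma Gs_succ_subset (M : NBW Q A) (w : ℕ → A) (j : ℕ) : Gs M w (j + 1) ⊆ Gs M w j := by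
  by_cases hj : j % 2 = 0
  · rw [Gs_succ_even M w hj]; exact Set.diff_subset
  · rw [Gs_succ_odd M w (by omega)]; exact Set.diff_subset

lemma Gs_anti (M : NBW Q A) (w : ℕ → A) : Antitone (Gs M w) :=
  antitone_nat_of_succ_le (fun j => Gs_succ_subset M w j)

lemma Gs_live_odd (M : NBW Q A) (w : ℕ → A) {j : ℕ} (hj : j % 2 = 1) :
    ∀ v ∈ Gs M w j, ¬ DagFiniteIn (M.Edge w) (Gs M w j) v := by
  obtain ⟨k, hk0, rfl⟩ : ∃ k, k % 2 = 0 ∧ j = k + 1 := ⟨j - 1, by omega, by omega⟩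
  intro v hv
  rw [Gs_succ_even M w hk0] at hv
  have hnf := hv.2
  rw [Set.mem_setOf_eq, DagFiniteIn, not_not] at hnf
  obtain ⟨b, hb⟩ := hnf
  intro hfin
  refine hfin ⟨b, hb.1, fun t => ?_, hb.2.2⟩
  rw [Gs_succ_even M w hk0]
  exact ⟨hb.2.1 t, not_dagFiniteIn_of_branch hb t⟩

lemma mem_Gs_of_edge (M : NBW Q A) (w : ℕ → A) :
    ∀ (j : ℕ) {l : ℕ} {q q' : Q}, M.Edge w l q q' → (q', l + 1) ∈ Gs M w j →
      (q, l) ∈ Gs M w j := by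
  intro j
  induction j with
  | zero =>
    intro l q q' he _
    exact he.1
  | succ j ih =>
    intro l q q' he h
    have hqj : (q, l) ∈ Gs M w j := ih he (Gs_succ_subset M w j h)
    by_cases hj : j % 2 = 0
    · rw [Gs_succ_even M w hj] at h ⊢
      refine ⟨hqj, ?_⟩
      intro hfin
      have hnf := h.2
      rw [Set.mem_setOf_eq, DagFiniteIn, not_not] at hnf
      obtain ⟨b, hb0, hbU, hbE⟩ := hnf
      refine hfin ⟨fun t => Nat.rec q (fun s _ => b s) t, rfl, fun t => ?_, fun t => ?_⟩
      · cases t with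
        | zero => simpa using hqj
        | succ s =>
          have := hbU s
          have heq : (l + 1) + s = l + (s + 1) := by omega
          rw [heq] at this
          exact this
      · cases t with
        | zero =>
          simp only [add_zero]
          show M.Edge w l q (b 0)
          rw [hb0]
          exact he
        | succ s =>
          have := hbE s
          have heq : (l + 1) + s = l + (s + 1) := by omega
          rw [heq] at this
          exact this
    · have hj1 : j % 2 = 1 := by omega
      rw [Gs_succ_odd M w hj1] at h ⊢
      refine ⟨hqj, ?_⟩
      intro hff
      have hstep : DagStep (M.Edge w) (Gs M w j) (q, l) (q', l + 1) := ⟨hqj, h.1, rfl, he⟩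
      exact h.2 (dagFFreeIn_step (Gs_live_odd M w hj1) hff hstep)

/-- Width bound: level widths of `G^{2i}` eventually drop by one per stage. -/
lemma Gs_width (M : NBW Q A) [Fintype Q] (w : ℕ → A) (hrej : ¬ M.Accepts w) :
    ∀ i : ℕ, ∃ L : ℕ, ∀ l ≥ L, {q | (q, l) ∈ Gs M w (2 * i)} = ∅ ∨
      {q | (q, l) ∈ Gs M w (2 * i)}.ncard + i ≤ Fintype.card Q := by
  intro i
  induction i with
  | zero =>
    refine ⟨0, fun l _ => Or.inr ?_⟩
    have h := Set.ncard_le_ncard (Set.subset_univ {q | (q, l) ∈ Gs M w (2 * 0)})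
      Set.finite_univ
    simpa [Set.ncard_univ, Nat.card_eq_fintype_card] using h
  | succ i ihw =>
    obtain ⟨L, hL⟩ := ihw
    have heq : 2 * (i + 1) = (2 * i + 1) + 1 := by ring
    by_cases hne : (Gs M w (2 * i + 1)).Nonempty
    · -- find an F-free vertex
      have hlive := Gs_live_odd M w (show (2 * i + 1) % 2 = 1 by omega)
        (j := 2 * i + 1)
      have hffree : ∃ v, DagFFreeIn (M.Edge w) (Gs M w (2 * i + 1)) M.F v := by
        by_contra hno
        push_neg at hno
        refine hrej (accepts_of_no_ffree M w (Gs M w (2 * i + 1))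
          (Gs_anti M w (Nat.zero_le _)) ?_ ?_ hne)
        · exact fun v hv => exists_dagStep_of_not_finite (hlive v hv)
        · intro v hv
          have h := hno v
          rw [DagFFreeIn, not_and] at h
          have h2 := h (hlive v hv)
          push_neg at h2
          exact h2
      obtain ⟨v₀, hv₀⟩ := hffree
      have hv₀U : v₀ ∈ Gs M w (2 * i + 1) := mem_of_not_dagFiniteIn hv₀.1
      have hnf := hv₀.1
      rw [DagFiniteIn, not_not] at hnf
      obtain ⟨b, hb⟩ := hnf
      have haux : ∀ t, DagFFreeIn (M.Edge w) (Gs M w (2 * i + 1)) M.F (b t, v₀.2 + t) := by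
        intro t
        induction t with
        | zero =>
          simp only [add_zero, hb.1, Prod.mk.eta]
          exact hv₀
        | succ t iht =>
          exact dagFFreeIn_step hlive iht ⟨hb.2.1 t, hb.2.1 (t + 1), rfl, hb.2.2 t⟩
      refine ⟨max L v₀.2, fun l hl => Or.inr ?_⟩
      set t := l - v₀.2 with ht
      have hlt : v₀.2 + t = l := by omega
      have hbU : (b t, l) ∈ Gs M w (2 * i + 1) := by rw [← hlt]; exact hb.2.1 t
      have hbff : DagFFreeIn (M.Edge w) (Gs M w (2 * i + 1)) M.F (b t, l) := by
        rw [← hlt]; exact haux t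
      have hnotin : (b t, l) ∉ Gs M w (2 * (i + 1)) := by
        rw [heq, Gs_succ_odd M w (show (2 * i + 1) % 2 = 1 by omega)]
        exact fun hmem => hmem.2 hbff
      have hbbig : b t ∈ {q | (q, l) ∈ Gs M w (2 * i)} :=
        Gs_succ_subset M w (2 * i) hbU
      have hsubs : {q | (q, l) ∈ Gs M w (2 * (i + 1))} ⊆
          {q | (q, l) ∈ Gs M w (2 * i)} \ {b t} := by
        intro x hx
        refine ⟨Gs_succ_subset M w (2 * i) (Gs_succ_subset M w (2 * i + 1) (by rw [← heq]; exact hx)), ?_⟩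
        intro hxe
        rw [Set.mem_singleton_iff] at hxe
        subst hxe
        exact hnotin hx
      have hbig : {q | (q, l) ∈ Gs M w (2 * i)}.ncard + i ≤ Fintype.card Q := by
        rcases hL l (le_trans (le_max_left L v₀.2) hl) with hemp | hcard
        · exact absurd (hemp ▸ hbbig) (Set.notMem_empty _)
        · exact hcard
      have h1 : {q | (q, l) ∈ Gs M w (2 * (i + 1))}.ncard ≤
          ({q | (q, l) ∈ Gs M w (2 * i)} \ {b t}).ncard :=
        Set.ncard_le_ncard hsubs (Set.toFinite _)
      have h2 : ({q | (q, l) ∈ Gs M w (2 * i)} \ {b t}).ncard <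
          {q | (q, l) ∈ Gs M w (2 * i)}.ncard :=
        Set.ncard_diff_singleton_lt_of_mem hbbig (Set.toFinite _)
      omega
    · refine ⟨0, fun l _ => Or.inl ?_⟩
      rw [Set.not_nonempty_iff_eq_empty] at hne
      ext x
      simp only [Set.mem_setOf_eq, Set.mem_empty_iff_false, iff_false]
      intro hx
      rw [heq] at hx
      have h2 := Gs_succ_subset M w (2 * i + 1) hx
      rw [hne] at h2
      exact h2

/-- If `M` rejects `w` then the stripping terminates: `G^{2n+1} = ∅`. -/
lemma Gs_empty (M : NBW Q A) [Fintype Q] (w : ℕ → A) (hrej : ¬ M.Accepts w) :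
    Gs M w (2 * Fintype.card Q + 1) = ∅ := by
  obtain ⟨L, hL⟩ := Gs_width M w hrej (Fintype.card Q)
  have hlev : ∀ l ≥ L, {q | (q, l) ∈ Gs M w (2 * Fintype.card Q)} = ∅ := by
    intro l hl
    rcases hL l hl with h | h
    · exact h
    · have : {q | (q, l) ∈ Gs M w (2 * Fintype.card Q)}.ncard = 0 := by omega
      rwa [Set.ncard_eq_zero (Set.toFinite _)] at this
  ext v
  simp only [Set.mem_empty_iff_false, iff_false]
  intro hv
  rw [Gs_succ_even M w (show (2 * Fintype.card Q) % 2 = 0 by omega)] at hv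
  have hnf := hv.2
  rw [Set.mem_setOf_eq, DagFiniteIn, not_not] at hnf
  obtain ⟨b, hb⟩ := hnf
  have hmem := hb.2.1 L
  have : b L ∈ {q | (q, v.2 + L) ∈ Gs M w (2 * Fintype.card Q)} := hmem
  rw [hlev (v.2 + L) (by omega)] at this
  exact this

end RankingAux
/-- nonaccepting DAGs via the unique ranking function: `M` rejects `w` iff
the stripping sequence on `G_{w,M}` terminates by step `2n+1` (so the induced ranking has
maximum rank at most `2n`, with `G^{2n+1}` empty), and every ω-branch of `G_{w,M}`
eventually gets trapped in odd ranks (from some level on, each of its vertices is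
`F`-free in some `G^{2i+1}` with `2i+1 ≤ 2n`). -/
theorem not_accepts_iff_ranking
    [Fintype Q] (M : NBW Q A) (hc : M.Complete) (w : ℕ → A) :
    ¬ M.Accepts w ↔
      (DagStrip (M.Edge w) M.F (M.DagVertices w) (2 * Fintype.card Q + 1) = ∅ ∧
       ∀ b : ℕ → Q, M.IsBranch w b → ∃ k, ∀ l ≥ k, ∃ i,
         2 * i + 1 ≤ 2 * Fintype.card Q ∧
         DagFFreeIn (M.Edge w) (DagStrip (M.Edge w) M.F (M.DagVertices w) (2 * i + 1))
           M.F (b l, l)) := by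
  constructor
  · intro hrej
    have hemp : Gs M w (2 * Fintype.card Q + 1) = ∅ := Gs_empty M w hrej
    refine ⟨hemp, ?_⟩
    intro b hb
    have hbV : ∀ l, b l ∈ M.V w l :=
      mem_V_of_steps M w hb.1 (fun l => (hb.2 l).2)
    have hP : ∀ l : ℕ, ∃ j, (b l, l) ∉ Gs M w j :=
      fun l => ⟨2 * Fintype.card Q + 1, by rw [hemp]; exact Set.notMem_empty _⟩
    set rk : ℕ → ℕ := fun l => Nat.find (hP l) with hrk
    have hrk_spec : ∀ l, (b l, l) ∉ Gs M w (rk l) := fun l => Nat.find_spec (hP l)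
    have hrk_lt : ∀ l j, j < rk l → (b l, l) ∈ Gs M w j := by
      intro l j hj
      have := Nat.find_min (hP l) hj
      rwa [not_not] at this
    have hmono : ∀ l, rk (l + 1) ≤ rk l := by
      intro l
      refine Nat.find_min' (hP (l + 1)) ?_
      intro hmem
      exact hrk_spec l (mem_Gs_of_edge M w (rk l) (hb.2 l) hmem)
    have hmono' : ∀ k l, k ≤ l → rk l ≤ rk k := by
      intro k l h
      induction l with
      | zero => rw [Nat.le_zero.mp h]
      | succ l ihl =>
        rcases Nat.lt_succ_iff_lt_or_eq.mp (Nat.lt_succ_of_le h) with h' | h'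
        · exact le_trans (hmono l) (ihl (by omega))
        · rw [← h']
    obtain ⟨k, hk⟩ := Nat.sInf_mem (Set.range_nonempty rk)
    set m := sInf (Set.range rk) with hm
    have hconst : ∀ l, k ≤ l → rk l = m :=
      fun l hl => le_antisymm (hk ▸ hmono' k l hl) (Nat.sInf_le ⟨l, rfl⟩)
    have hm1 : 1 ≤ m := by
      rcases Nat.eq_zero_or_pos m with h0 | h1
      · exfalso
        have := hrk_spec k
        rw [hk, h0] at this
        exact this (hbV k)
      · exact h1
    have hmem_pred : ∀ l, k ≤ l → (b l, l) ∈ Gs M w (m - 1) := by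
      intro l hl
      exact hrk_lt l (m - 1) (by rw [hconst l hl]; omega)
    have hnotmem : ∀ l, k ≤ l → (b l, l) ∉ Gs M w m := by
      intro l hl
      have := hrk_spec l
      rwa [hconst l hl] at this
    have hmeven : m % 2 = 0 := by
      by_contra hoddm
      have hodd : m % 2 = 1 := by omega
      have hm0 : (m - 1) % 2 = 0 := by omega
      have hmeq : m = (m - 1) + 1 := by omega
      have hnot := hnotmem k le_rfl
      rw [hmeq, Gs_succ_even M w hm0] at hnot
      have hfin : DagFiniteIn (M.Edge w) (Gs M w (m - 1)) (b k, k) := by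
        by_contra hnf
        exact hnot ⟨hmem_pred k le_rfl, hnf⟩
      refine hfin ⟨fun t => b (k + t), rfl, fun t => ?_, fun t => ?_⟩
      · exact hmem_pred (k + t) (by omega)
      · exact hb.2 (k + t)
    have hm2 : 2 ≤ m := by omega
    refine ⟨k, fun l hl => ⟨m / 2 - 1, ?_, ?_⟩⟩
    · -- 2 * (m / 2 - 1) + 1 ≤ 2 * Fintype.card Q
      by_contra hgt
      have hsub : Gs M w (2 * Fintype.card Q + 1) ⊆ ∅ → True := fun _ => trivial
      have h1 : 2 * Fintype.card Q + 1 ≤ m - 1 := by omega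
      have := Gs_anti M w h1 (hmem_pred l hl)
      rw [hemp] at this
      exact this
    · have hi : 2 * (m / 2 - 1) + 1 = m - 1 := by omega
      have hm1' : (m - 1) % 2 = 1 := by omega
      have hmeq : m = (m - 1) + 1 := by omega
      have hnot := hnotmem l hl
      rw [hmeq, Gs_succ_odd M w hm1'] at hnot
      have hff : DagFFreeIn (M.Edge w) (Gs M w (m - 1)) M.F (b l, l) := by
        by_contra hnff
        exact hnot ⟨hmem_pred l hl, hnff⟩
      rw [hi]
      exact hff
  · rintro ⟨hemp, htrap⟩ hacc
    obtain ⟨ρ, hrun, hinf⟩ := hacc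
    have hbr : M.IsBranch w ρ := by
      refine ⟨hrun.1, fun l => ⟨?_, hrun.2 l⟩⟩
      exact mem_V_of_steps M w hrun.1 hrun.2 l
    obtain ⟨k, hk⟩ := htrap ρ hbr
    obtain ⟨mm, hmge, hmF⟩ := hinf k
    obtain ⟨i, hle, hff⟩ := hk mm hmge
    exact hff.2 (ρ mm, mm) Relation.ReflTransGen.refl hmF
end

section
/- In the slice-based DAG construction, the sets at each level are pairwise disjoint, and each vertex at level l+1 has exactly one predecessor at level l (the DAG G^s_{w,A} is co-deterministic). -/
open Classical

variable {Q : Type} {A : Type}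

/-- in the slice-based DAG construction, the sets at each level are
pairwise disjoint, and each (nonempty) vertex at level `l+1` has exactly one
predecessor at level `l` (namely the position `p'/2` it was derived from); thus
`G^s_{w,M}` is co-deterministic. -/
theorem slice_dag_codeterministic
    (M : NBW Q A) (w : ℕ → A) :
    (∀ (l p p' : ℕ), p ≠ p' → Disjoint (M.sliceSet w l p) (M.sliceSet w l p')) ∧
    (∀ (l p' : ℕ), M.sliceSet w (l + 1) p' ≠ ∅ →
      ∃! p : ℕ, M.sliceSet w l p ≠ ∅ ∧ p' / 2 = p) := by
  constructor
  · have key : ∀ (l p p' : ℕ), p < p' →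
        Disjoint (M.sliceSet w l p) (M.sliceSet w l p') := by
      intro l p p' hpp
      rw [Set.disjoint_left]
      intro x hx hx'
      cases l with
      | zero =>
        simp only [NBW.sliceSet] at hx hx'
        split_ifs at hx hx' <;>
          first
            | exact hx | exact hx' | omega
            | exact hx.2 hx'.2 | exact hx'.2 hx.2
      | succ l =>
        simp only [NBW.sliceSet] at hx hx'
        exact hx.2 (Set.mem_biUnion (Set.mem_Ioi.2 hpp) hx'.1)
    intro l p p' hne
    rcases Nat.lt_or_ge p p' with h | h
    · exact key l p p' h
    · exact (key l p' p (lt_of_le_of_ne h (Ne.symm hne))).symm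
  · intro l p' hne
    refine ⟨p' / 2, ⟨?_, rfl⟩, ?_⟩
    · obtain ⟨x, hx⟩ := Set.nonempty_iff_ne_empty.2 hne
      simp only [NBW.sliceSet] at hx
      have hx1 := hx.1
      have hmem : x ∈ M.δset (M.sliceSet w l (p' / 2)) (w l) := by
        split_ifs at hx1 with h
        · exact hx1.1
        · exact hx1.1
      obtain ⟨q, hq, _⟩ := Set.mem_iUnion₂.1 hmem
      exact Set.nonempty_iff_ne_empty.1 ⟨q, hq⟩
    · rintro p ⟨-, hp⟩
      exact hp.symm
end
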